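/- For every i ∈ {1, …, N} the following operator identities hold on smooth complex functions on Ω: Σ_{j=1}^N x_j S_{ij} = x_i + [S, x_i]; Σ_{j=1}^N S_{ij} x_j = x_i − [S, x_i]; Σ_{j=1}^N ∇_j S_{ij} = ∇_i + [S, ∇_i]; Σ_{j=1}^N S_{ij} ∇_j = ∇_i − [S, ∇_i]. -/

import Mathlib

noncomputable section

open Finset

/-- Euclidean space `ℝ^N`. -/
abbrev E (N : ℕ) := EuclideanSpace ℝ (Fin N)

variable {N : ℕ}

/-- The reflection `s_α(x) = x - (2(α,x)/(α,α)) α`. -/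
def sRefl (α x : E N) : E N := x - (2 * (inner ℝ α x : ℝ) / (inner ℝ α α : ℝ)) • α

/-- Action of the reflection `s_α` on functions: `(s_α ψ)(x) = ψ(s_α⁻¹ x) = ψ(s_α x)`. -/
def refOp (α : E N) (f : E N → ℂ) : E N → ℂ := fun x => f (sRefl α x)

/-- Multiplication by the `k`-th coordinate. -/
def mulX (k : Fin N) (f : E N → ℂ) : E N → ℂ := fun x => (x k : ℂ) * f x

/-- The partial derivative `∂_i`. -/
def pd (i : Fin N) (f : E N → ℂ) : E N → ℂ :=
  fun x => fderiv ℝ f x (EuclideanSpace.single i 1)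

/-- The Dunkl operator `∇_i = ∂_i − Σ_{α∈𝓡₊} g_α α_i (α,x)⁻¹ s_α`. -/
def dunkl (Rp : Finset (E N)) (g : E N → ℂ) (i : Fin N) (f : E N → ℂ) : E N → ℂ :=
  fun x => pd i f x - ∑ α ∈ Rp, g α * (α i : ℂ) * ((inner ℝ α x : ℝ) : ℂ)⁻¹ * refOp α f x

/-- The operator `S_{ij} = δ_{ij} + Σ_{α∈𝓡₊} (2 g_α α_i α_j/(α,α)) s_α`. -/
def Sop (Rp : Finset (E N)) (g : E N → ℂ) (i j : Fin N) (f : E N → ℂ) : E N → ℂ :=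
  fun x => (if i = j then 1 else 0) * f x
    + ∑ α ∈ Rp, 2 * g α * (α i : ℂ) * (α j : ℂ) / ((inner ℝ α α : ℝ) : ℂ) * refOp α f x

/-- The element `S = −Σ_{α∈𝓡₊} g_α s_α` acting as an operator. -/
def Sbig (Rp : Finset (E N)) (g : E N → ℂ) (f : E N → ℂ) : E N → ℂ :=
  fun x => -∑ α ∈ Rp, g α * refOp α f x

/-- The Dunkl angular momentum `L_{ij} = x_i ∇_j − x_j ∇_i`. -/
def Lop (Rp : Finset (E N)) (g : E N → ℂ) (i j : Fin N) (f : E N → ℂ) : E N → ℂ :=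
  fun x => (x i : ℂ) * dunkl Rp g j f x - (x j : ℂ) * dunkl Rp g i f x

/-- The Dunkl Laplacian `∇² = Σ_j ∇_j²`. -/
def lapD (Rp : Finset (E N)) (g : E N → ℂ) (f : E N → ℂ) : E N → ℂ :=
  fun x => ∑ j, dunkl Rp g j (dunkl Rp g j f) x

/-- The Dunkl--Coulomb Hamiltonian `ℋ_γ = Σ_i ∇_i² + 2γ r⁻¹`. -/
def ham (Rp : Finset (E N)) (g : E N → ℂ) (γ : ℂ) (f : E N → ℂ) : E N → ℂ :=
  fun x => lapD Rp g f x + 2 * γ * (‖x‖ : ℂ)⁻¹ * f x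

/-- The Dunkl Laplace--Runge--Lenz vector component
`A_i = −(1/2) Σ_j {L_{ij}, ∇_j} + (1/2)[∇_i, S] − γ x_i r⁻¹`. -/
def lrl (Rp : Finset (E N)) (g : E N → ℂ) (γ : ℂ) (i : Fin N) (f : E N → ℂ) : E N → ℂ :=
  fun x =>
    -(1 / 2 : ℂ) * ∑ j, (Lop Rp g i j (dunkl Rp g j f) x + dunkl Rp g j (Lop Rp g i j f) x)
    + (1 / 2 : ℂ) * (dunkl Rp g i (Sbig Rp g f) x - Sbig Rp g (dunkl Rp g i f) x)
    - γ * (x i : ℂ) * (‖x‖ : ℂ)⁻¹ * f x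

/-- The Euler operator `r∂_r = Σ_k x_k ∂_k`. -/
def euler (f : E N → ℂ) : E N → ℂ := fun x => ∑ k, (x k : ℂ) * pd k f x

lemma sRefl_coord (α x : E N) (k : Fin N) :
    sRefl α x k = x k - (2 * (inner ℝ α x : ℝ) / (inner ℝ α α : ℝ)) * α k := by
  simp [sRefl]
lemma inner_sRefl (α β x : E N) : (inner ℝ β (sRefl α x) : ℝ) = (inner ℝ (sRefl α β) x : ℝ) := by
  simp only [sRefl, inner_sub_left, inner_sub_right, real_inner_smul_left, real_inner_smul_right]
  rw [real_inner_comm β α]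
  ring
lemma inner_self_ne {α : E N} (hα : α ≠ 0) : (inner ℝ α α : ℝ) ≠ 0 :=
  (inner_self_ne_zero (𝕜 := ℝ)).mpr hα
lemma sRefl_self {α : E N} (hα : α ≠ 0) : sRefl α α = -α := by
  unfold sRefl
  rw [mul_div_assoc, div_self (inner_self_ne hα)]
  module
lemma sRefl_neg (α x : E N) : sRefl (-α) x = sRefl α x := by
  unfold sRefl
  simp [inner_neg_left, inner_neg_right, neg_div, smul_neg, neg_smul]
lemma sRefl_sRefl {α : E N} (hα : α ≠ 0) (x : E N) : sRefl α (sRefl α x) = x := by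
  have h1 : (inner ℝ α (sRefl α x) : ℝ) = - inner ℝ α x := by
    rw [inner_sRefl, sRefl_self hα, inner_neg_left]
  conv_lhs => rw [sRefl, h1]
  rw [sRefl]; module
def sMap (α : E N) : E N →L[ℝ] E N :=
  ContinuousLinearMap.id ℝ (E N) - (2 / (inner ℝ α α : ℝ)) • ((innerSL ℝ α).smulRight α)
lemma sMap_apply (α x : E N) : sMap α x = sRefl α x := by
  simp only [sMap, sRefl, ContinuousLinearMap.sub_apply, ContinuousLinearMap.id_apply,
    ContinuousLinearMap.smul_apply, ContinuousLinearMap.smulRight_apply, innerSL_apply_apply]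
  rw [smul_smul]
  congr 1
  ring
lemma sRefl_conj {α : E N} (hα : α ≠ 0) (β x : E N) :
    sRefl (sRefl α β) (sRefl α x) = sRefl α (sRefl β x) := by
  have hiC : (inner ℝ (sRefl α β) (sRefl α β) : ℝ) = inner ℝ β β := by
    rw [inner_sRefl, sRefl_sRefl hα]
  have hiI : (inner ℝ (sRefl α β) (sRefl α x) : ℝ) = inner ℝ β x := by
    rw [inner_sRefl, sRefl_sRefl hα]
  have hrhs : sRefl α (sRefl β x)
      = sRefl α x - (2 * (inner ℝ β x : ℝ) / (inner ℝ β β : ℝ)) • sRefl α β := by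
    rw [← sMap_apply]
    show sMap α (x - _ • β) = _
    rw [map_sub, map_smul, sMap_apply, sMap_apply]
  rw [hrhs]
  conv_lhs => rw [sRefl, hiC, hiI]
lemma basis_decomp (v : E N) : v = ∑ k, v k • EuclideanSpace.single k 1 := by
  have := (EuclideanSpace.basisFun (Fin N) ℝ).sum_repr v
  simpa [EuclideanSpace.basisFun_apply, EuclideanSpace.basisFun_repr] using this.symm
lemma fderiv_vec (f : E N → ℂ) (x α : E N) :
    fderiv ℝ f x α = ∑ k, ((α k : ℝ) : ℂ) * pd k f x := by
  conv_lhs => rw [basis_decomp α]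
  rw [map_sum]
  exact Finset.sum_congr rfl fun k _ => by
    rw [map_smul, Complex.real_smul]; rfl
lemma omega_open (R : Finset (E N)) : IsOpen {x : E N | ∀ α ∈ R, (inner ℝ α x : ℝ) ≠ 0} := by
  have h : {x : E N | ∀ α ∈ R, (inner ℝ α x : ℝ) ≠ 0}
      = ⋂ α ∈ R, {x : E N | (inner ℝ α x : ℝ) ≠ 0} := by
    ext x; simp
  rw [h]
  refine isOpen_biInter_finset fun α _ => ?_
  have : Continuous fun x : E N => (inner ℝ α x : ℝ) := (innerSL ℝ α).continuous
  exact isOpen_ne.preimage this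
lemma inner_single (α : E N) (j : Fin N) : (inner ℝ α (EuclideanSpace.single j 1) : ℝ) = α j := by
  simp [EuclideanSpace.inner_single_right]
lemma refOp_eq_comp (α : E N) (f : E N → ℂ) : refOp α f = f ∘ (sMap α) :=
  funext fun x => by simp [refOp, Function.comp, sMap_apply]
lemma diff_refOp {f : E N → ℂ} {α x : E N} (hd : DifferentiableAt ℝ f (sRefl α x)) :
    DifferentiableAt ℝ (refOp α f) x := by
  have h2 : DifferentiableAt ℝ f (sMap α x) := by rw [sMap_apply]; exact hd
  rw [refOp_eq_comp]
  exact h2.comp x (sMap α).differentiableAt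
lemma pd_refOp {f : E N → ℂ} {α : E N} (x : E N) (hd : DifferentiableAt ℝ f (sRefl α x))
    (j : Fin N) :
    pd j (refOp α f) x = pd j f (sRefl α x)
      - ((2 * α j / (inner ℝ α α : ℝ) : ℝ) : ℂ) * ∑ k, ((α k : ℝ) : ℂ) * pd k f (sRefl α x) := by
  have h2 : DifferentiableAt ℝ f (sMap α x) := by rw [sMap_apply]; exact hd
  have hcomp : fderiv ℝ (refOp α f) x = (fderiv ℝ f (sMap α x)).comp (sMap α) := by
    rw [refOp_eq_comp]
    rw [fderiv_comp x h2 (sMap α).differentiableAt, (sMap α).fderiv]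
  have hsm : sMap α (EuclideanSpace.single j 1)
      = EuclideanSpace.single j 1 - (2 * α j / (inner ℝ α α : ℝ)) • α := by
    rw [sMap_apply]; unfold sRefl; rw [inner_single]
  show fderiv ℝ (refOp α f) x _ = _
  rw [hcomp, ContinuousLinearMap.comp_apply, hsm, map_sub, map_smul, Complex.real_smul,
    sMap_apply]
  congr 1
  rw [fderiv_vec]
lemma pd_const_mul {h : E N → ℂ} {x : E N} (hd : DifferentiableAt ℝ h x) (c : ℂ) (j : Fin N) :
    pd j (fun y => c * h y) x = c * pd j h x := by
  show fderiv ℝ _ x _ = _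
  rw [fderiv_const_mul hd c]
  rfl
lemma pd_sum {ι : Type*} (s : Finset ι) (h : ι → E N → ℂ) {x : E N}
    (hd : ∀ a ∈ s, DifferentiableAt ℝ (h a) x) (j : Fin N) :
    pd j (fun y => ∑ a ∈ s, h a y) x = ∑ a ∈ s, pd j (h a) x := by
  show fderiv ℝ _ x _ = _
  rw [fderiv_fun_sum hd]
  simp [pd]
lemma pd_add {h₁ h₂ : E N → ℂ} {x : E N} (hd₁ : DifferentiableAt ℝ h₁ x)
    (hd₂ : DifferentiableAt ℝ h₂ x) (j : Fin N) :
    pd j (fun y => h₁ y + h₂ y) x = pd j h₁ x + pd j h₂ x := by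
  show fderiv ℝ _ x _ = _
  rw [fderiv_fun_add hd₁ hd₂]
  rfl
lemma pd_neg (h : E N → ℂ) (x : E N) (j : Fin N) :
    pd j (fun y => -h y) x = - pd j h x := by
  show fderiv ℝ _ x _ = _
  rw [fderiv_fun_neg]
  rfl


lemma inner_sRefl_self {α : E N} (hα : α ≠ 0) (x : E N) :
    (inner ℝ α (sRefl α x) : ℝ) = - inner ℝ α x := by
  rw [inner_sRefl, sRefl_self hα, inner_neg_left]

lemma inner_cast (α v : E N) :
    ((inner ℝ α v : ℝ) : ℂ) = ∑ j, ((α j : ℝ) : ℂ) * ((v j : ℝ) : ℂ) := by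
  rw [PiLp.inner_apply]
  push_cast
  exact Finset.sum_congr rfl fun j _ => by simp [RCLike.inner_apply]; ring

/-- `Σ_j x_j S_{ij} = x_i + [S, x_i]`, `Σ_j S_{ij} x_j = x_i − [S, x_i]`,
`Σ_j ∇_j S_{ij} = ∇_i + [S, ∇_i]`, `Σ_j S_{ij} ∇_j = ∇_i − [S, ∇_i]`
as operators on smooth complex functions on Ω. -/
theorem statement2
    (R Rp : Finset (E N)) (g : E N → ℂ)
    (hR0 : ∀ α ∈ R, α ≠ (0 : E N))
    (hred : ∀ α ∈ R, ∀ c : ℝ, c • α ∈ R → c = 1 ∨ c = -1)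
    (hRinv : ∀ α ∈ R, ∀ β ∈ R, sRefl α β ∈ R)
    (hsub : Rp ⊆ R)
    (hpos : ∀ α ∈ R, (α ∈ Rp ∧ -α ∉ Rp) ∨ (-α ∈ Rp ∧ α ∉ Rp))
    (hg : ∀ α ∈ R, ∀ β ∈ R, g (sRefl β α) = g α)
    (i : Fin N)
    (f : E N → ℂ)
    (hf : ContDiffOn ℝ (⊤ : ℕ∞) f {x : E N | ∀ α ∈ R, (inner ℝ α x : ℝ) ≠ 0})
    (x : E N) (hx : ∀ α ∈ R, (inner ℝ α x : ℝ) ≠ 0) :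
    (∑ j, mulX j (Sop Rp g i j f) x
        = mulX i f x + (Sbig Rp g (mulX i f) x - mulX i (Sbig Rp g f) x))
    ∧ (∑ j, Sop Rp g i j (mulX j f) x
        = mulX i f x - (Sbig Rp g (mulX i f) x - mulX i (Sbig Rp g f) x))
    ∧ (∑ j, dunkl Rp g j (Sop Rp g i j f) x
        = dunkl Rp g i f x
          + (Sbig Rp g (dunkl Rp g i f) x - dunkl Rp g i (Sbig Rp g f) x))
    ∧ (∑ j, Sop Rp g i j (dunkl Rp g j f) x
        = dunkl Rp g i f x
          - (Sbig Rp g (dunkl Rp g i f) x - dunkl Rp g i (Sbig Rp g f) x)) := by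
  have hRne : ∀ α ∈ Rp, α ≠ (0 : E N) := fun α hα => hR0 α (hsub hα)
  have hCne : ∀ α ∈ Rp, ((inner ℝ α α : ℝ) : ℂ) ≠ 0 := fun α hα =>
    Complex.ofReal_ne_zero.mpr (inner_self_ne (hRne α hα))
  have hΩ := omega_open R
  have hdf : ∀ {y : E N}, (∀ α ∈ R, (inner ℝ α y : ℝ) ≠ 0) → DifferentiableAt ℝ f y :=
    fun {y} hy => (hf.contDiffAt (hΩ.mem_nhds hy)).differentiableAt (by simp)
  have hys : ∀ α ∈ Rp, ∀ β ∈ R, (inner ℝ β (sRefl α x) : ℝ) ≠ 0 := fun α hα β hβ => by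
    rw [inner_sRefl]; exact hx _ (hRinv α (hsub hα) β hβ)
  have hdfy : ∀ α ∈ Rp, DifferentiableAt ℝ f (sRefl α x) := fun α hα => hdf (hys α hα)
  have hdfx : DifferentiableAt ℝ f x := hdf hx
  have hdref : ∀ α ∈ Rp, DifferentiableAt ℝ (refOp α f) x := fun α hα => diff_refOp (hdfy α hα)
  have hgneg : ∀ α ∈ R, g (-α) = g α := fun α hα => by
    have h := hg α hα α hα
    rwa [sRefl_self (hR0 α hα)] at h
  have key : ∀ α ∈ Rp, ∀ T : E N → ℂ, (∀ β ∈ R, T (-β) = T β) →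
      ∑ β ∈ Rp, T (sRefl α β) = ∑ β ∈ Rp, T β := by
    intro α hα T hT
    classical
    set φ : E N → E N := fun β => if sRefl α β ∈ Rp then sRefl α β else -(sRefl α β) with hφ
    have hmemR : ∀ β ∈ Rp, sRefl α β ∈ R := fun β hβ => hRinv α (hsub hα) β (hsub hβ)
    have hφmem : ∀ β ∈ Rp, φ β ∈ Rp := by
      intro β hβ
      by_cases h : sRefl α β ∈ Rp
      · simpa [hφ, h]
      · rcases hpos _ (hmemR β hβ) with ⟨h1, _⟩ | ⟨h1, _⟩
        · exact absurd h1 h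
        · simpa [hφ, h] using h1
    have hinv : ∀ β ∈ Rp, φ (φ β) = β := by
      intro β hβ
      by_cases h : sRefl α β ∈ Rp
      · have h0 : φ β = sRefl α β := by simp [hφ, h]
        rw [h0]
        have h2 : sRefl α (sRefl α β) = β := sRefl_sRefl (hRne α hα) β
        simp [hφ, h2, hβ]
      · have h0 : φ β = -(sRefl α β) := by simp [hφ, h]
        rw [h0]
        have h2 : sRefl α (-(sRefl α β)) = -β := by
          rw [← sMap_apply, map_neg, sMap_apply, sRefl_sRefl (hRne α hα)]
        have h3 : -β ∉ Rp := by
          rcases hpos β (hsub hβ) with ⟨_, h4⟩ | ⟨_, h4⟩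
          · exact h4
          · exact absurd hβ h4
        simp [hφ, h2, h3]
    refine Finset.sum_nbij' φ φ hφmem hφmem hinv hinv ?_
    intro β hβ
    by_cases h : sRefl α β ∈ Rp
    · simp [hφ, h]
    · have h0 : φ β = -(sRefl α β) := by simp [hφ, h]
      rw [h0, hT _ (hmemR β hβ)]
  have hterm : ∀ α ∈ Rp, ∀ β ∈ Rp,
      g (sRefl α β) = g β
      ∧ sRefl α (sRefl α β) = β
      ∧ (inner ℝ (sRefl α β) x : ℝ) = (inner ℝ β (sRefl α x) : ℝ)
      ∧ sRefl α (sRefl (sRefl α β) x) = sRefl β (sRefl α x) := by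
    intro α hα β hβ
    refine ⟨hg β (hsub hβ) α (hsub hα), sRefl_sRefl (hRne α hα) β,
      (inner_sRefl α β x).symm, ?_⟩
    have h := sRefl_conj (hRne α hα) (sRefl α β) x
    rw [sRefl_sRefl (hRne α hα)] at h
    exact h.symm
  have hTeven : ∀ α ∈ Rp, ∀ β ∈ R, ∀ c : ℂ,
      g (-β) * c * ((inner ℝ (-β) x : ℝ) : ℂ)⁻¹ * f (sRefl α (sRefl (-β) x))
        = -(g β * c * ((inner ℝ β x : ℝ) : ℂ)⁻¹ * f (sRefl α (sRefl β x))) := by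
    intro α hα β hβ c
    rw [hgneg β hβ, sRefl_neg]
    have h5 : ((inner ℝ (-β) x : ℝ) : ℂ) = -((inner ℝ β x : ℝ) : ℂ) := by
      rw [inner_neg_left]; push_cast; ring
    rw [h5, inv_neg]
    ring
  have hcoordneg : ∀ (v : E N) (k : Fin N), ((-v) k : ℝ) = -(v k : ℝ) := fun v k => rfl
  have coreU : ∀ α ∈ Rp,
      ∑ β ∈ Rp, g β * (β i : ℂ) * ((inner ℝ β (sRefl α x) : ℝ) : ℂ)⁻¹ * f (sRefl β (sRefl α x))
      = ∑ β ∈ Rp, g β * ((sRefl α β) i : ℂ) * ((inner ℝ β x : ℝ) : ℂ)⁻¹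
          * f (sRefl α (sRefl β x)) := by
    intro α hα
    have hk := key α hα (fun γ => g γ * ((sRefl α γ) i : ℂ) * ((inner ℝ γ x : ℝ) : ℂ)⁻¹
        * f (sRefl α (sRefl γ x))) ?_
    · rw [← hk]
      refine Finset.sum_congr rfl fun β hβ => ?_
      obtain ⟨e1, e2, e3, e4⟩ := hterm α hα β hβ
      rw [e1, e2, e3, e4]
    · intro β hβR
      beta_reduce
      have hrn : sRefl α (-β) = -(sRefl α β) := by
        rw [← sMap_apply, map_neg, sMap_apply]
      have h6 : (((-(sRefl α β)) i : ℝ) : ℂ) = -((sRefl α β) i : ℂ) := by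
        rw [hcoordneg]; push_cast; ring
      have := hTeven α hα β hβR (-((sRefl α β) i : ℂ))
      rw [hrn, h6]
      rw [show g (-β) * -((sRefl α β) i : ℂ) = -(g (-β) * ((sRefl α β) i : ℂ)) by ring] at *
      calc -(g (-β) * ((sRefl α β) i:ℂ)) * ((inner ℝ (-β) x : ℝ) : ℂ)⁻¹ * f (sRefl α (sRefl (-β) x))
          = g (-β) * ((sRefl α β) i:ℂ) * (-((inner ℝ (-β) x : ℝ) : ℂ)⁻¹) * f (sRefl α (sRefl (-β) x)) := by
            ring
        _ = g β * ((sRefl α β) i:ℂ) * ((inner ℝ β x : ℝ) : ℂ)⁻¹ * f (sRefl α (sRefl β x)) := by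
            rw [hgneg β hβR, sRefl_neg]
            have h5 : ((inner ℝ (-β) x : ℝ) : ℂ) = -((inner ℝ β x : ℝ) : ℂ) := by
              rw [inner_neg_left]; push_cast; ring
            rw [h5, inv_neg, neg_neg]
  have coreV : ∀ α ∈ Rp,
      ∑ β ∈ Rp, g β * ((sRefl α β) i : ℂ) * ((inner ℝ β (sRefl α x) : ℝ) : ℂ)⁻¹
          * f (sRefl β (sRefl α x))
      = ∑ β ∈ Rp, g β * (β i : ℂ) * ((inner ℝ β x : ℝ) : ℂ)⁻¹ * f (sRefl α (sRefl β x)) := by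
    intro α hα
    have hk := key α hα (fun γ => g γ * (γ i : ℂ) * ((inner ℝ γ x : ℝ) : ℂ)⁻¹
        * f (sRefl α (sRefl γ x))) ?_
    · rw [← hk]
      refine Finset.sum_congr rfl fun β hβ => ?_
      obtain ⟨e1, e2, e3, e4⟩ := hterm α hα β hβ
      rw [e1, e3, e4]
    · intro β hβR
      beta_reduce
      have h6 : (((-β) i : ℝ) : ℂ) = -(β i : ℂ) := by rw [hcoordneg]; push_cast; ring
      have h5 : ((inner ℝ (-β) x : ℝ) : ℂ) = -((inner ℝ β x : ℝ) : ℂ) := by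
        rw [inner_neg_left]; push_cast; ring
      rw [h6, h5, inv_neg, hgneg β hβR, sRefl_neg]
      ring
  have hpdSbig : ∀ j, pd j (Sbig Rp g f) x = -∑ α ∈ Rp, g α * pd j (refOp α f) x := by
    intro j
    have h0 : Sbig Rp g f
        = fun y => -(fun y' => ∑ α ∈ Rp, g α * refOp α f y') y := rfl
    rw [h0, pd_neg, pd_sum Rp (fun a y => g a * refOp a f y)
      (fun α hα => (hdref α hα).const_mul (g α)) j]
    congr 1
    exact Finset.sum_congr rfl fun α hα => pd_const_mul (hdref α hα) (g α) j
  have hpdSop : ∀ j : Fin N, pd j (Sop Rp g i j f) x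
      = (if i = j then (1:ℂ) else 0) * pd j f x
        + ∑ α ∈ Rp, 2 * g α * (α i : ℂ) * (α j : ℂ) / ((inner ℝ α α : ℝ) : ℂ)
            * pd j (refOp α f) x := by
    intro j
    have h0 : Sop Rp g i j f = fun y => (if i = j then (1:ℂ) else 0) * f y
        + (fun y' => ∑ α ∈ Rp,
            (2 * g α * (α i : ℂ) * (α j : ℂ) / ((inner ℝ α α : ℝ) : ℂ)) * refOp α f y') y := rfl
    rw [h0, pd_add (hdfx.const_mul _)
        (DifferentiableAt.fun_sum fun α hα => (hdref α hα).const_mul _) j,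
      pd_const_mul hdfx, pd_sum Rp _ (fun α hα => (hdref α hα).const_mul _) j]
    congr 1
    exact Finset.sum_congr rfl fun α hα => pd_const_mul (hdref α hα) _ j
  have hmulin : ∀ α ∈ Rp, ∀ y : E N, g α * ∑ β ∈ Rp,
        g β * (β i : ℂ) * ((inner ℝ β y : ℝ) : ℂ)⁻¹ * f (sRefl β y)
      = ∑ β ∈ Rp, g α * g β * (β i : ℂ) * ((inner ℝ β y : ℝ) : ℂ)⁻¹ * f (sRefl β y) := by
    intro α hα y
    rw [Finset.mul_sum]
    exact Finset.sum_congr rfl fun β _ => by ring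
  have hcomm : Sbig Rp g (dunkl Rp g i f) x - dunkl Rp g i (Sbig Rp g f) x
      = ∑ α ∈ Rp,
        ((∑ β ∈ Rp, g α * g β * (β i : ℂ) * ((inner ℝ β (sRefl α x) : ℝ) : ℂ)⁻¹
            * f (sRefl β (sRefl α x)))
          - 2 * g α * (α i : ℂ) / ((inner ℝ α α : ℝ) : ℂ)
            * ∑ k, (α k : ℂ) * pd k f (sRefl α x)
          - ∑ β ∈ Rp, g α * g β * (β i : ℂ) * ((inner ℝ β x : ℝ) : ℂ)⁻¹
            * f (sRefl α (sRefl β x))) := by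
    have h1 : Sbig Rp g (dunkl Rp g i f) x
        = ∑ α ∈ Rp, (-(g α * pd i f (sRefl α x))
          + ∑ β ∈ Rp, g α * g β * (β i : ℂ) * ((inner ℝ β (sRefl α x) : ℝ) : ℂ)⁻¹
            * f (sRefl β (sRefl α x))) := by
      simp only [Sbig, refOp, dunkl]
      rw [← Finset.sum_neg_distrib]
      refine Finset.sum_congr rfl fun α hα => ?_
      rw [mul_sub, hmulin α hα (sRefl α x)]
      ring
    have h2 : dunkl Rp g i (Sbig Rp g f) x
        = (-∑ α ∈ Rp, (g α * pd i f (sRefl α x)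
            - 2 * g α * (α i : ℂ) / ((inner ℝ α α : ℝ) : ℂ)
              * ∑ k, (α k : ℂ) * pd k f (sRefl α x)))
          + ∑ α ∈ Rp, ∑ β ∈ Rp, g α * g β * (β i : ℂ) * ((inner ℝ β x : ℝ) : ℂ)⁻¹
            * f (sRefl α (sRefl β x)) := by
      show pd i (Sbig Rp g f) x - _ = _
      rw [hpdSbig i, sub_eq_add_neg]
      congr 1
      · congr 1
        refine Finset.sum_congr rfl fun α hα => ?_
        rw [pd_refOp x (hdfy α hα) i]
        push_cast
        ring
      · simp only [Sbig, refOp]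
        rw [show ∀ z : ℂ, -z = (-1) * z from fun z => by ring, Finset.mul_sum]
        rw [show (∑ α ∈ Rp, ∑ β ∈ Rp, g α * g β * (β i : ℂ) * ((inner ℝ β x : ℝ) : ℂ)⁻¹
              * f (sRefl α (sRefl β x)))
            = ∑ β ∈ Rp, ∑ α ∈ Rp, g α * g β * (β i : ℂ) * ((inner ℝ β x : ℝ) : ℂ)⁻¹
              * f (sRefl α (sRefl β x)) from Finset.sum_comm]
        refine Finset.sum_congr rfl fun β hβ => ?_
        rw [show ∀ a S : ℂ, (-1 : ℂ) * (a * -S) = a * S from fun _ _ => by ring]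
        rw [Finset.mul_sum]
        exact Finset.sum_congr rfl fun α hα => by ring
    rw [h1, h2]
    rw [show ∀ a b c : ℂ, a - (-b + c) = a + b - c from fun a b c => by ring]
    rw [← Finset.sum_add_distrib, ← Finset.sum_sub_distrib]
    refine Finset.sum_congr rfl fun α hα => ?_
    ring
  refine ⟨?_, ?_, ?_, ?_⟩
  · -- part 1
    simp only [mulX, Sop, Sbig, refOp, mul_add, Finset.mul_sum, Finset.sum_add_distrib]
    have h1 : ∑ j, (x j : ℂ) * ((if i = j then 1 else 0) * f x) = (x i : ℂ) * f x := by
      simp [mul_ite, Finset.sum_ite_eq]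
    rw [h1, Finset.sum_comm]
    congr 1
    rw [mul_neg, sub_neg_eq_add, Finset.mul_sum, ← Finset.sum_neg_distrib, ← Finset.sum_add_distrib]
    refine Finset.sum_congr rfl fun α hα => ?_
    have hsum : ∑ j, (x j : ℂ) * (2 * g α * (α i : ℂ) * (α j : ℂ) / ((inner ℝ α α : ℝ) : ℂ)
          * f (sRefl α x))
        = 2 * g α * (α i : ℂ) / ((inner ℝ α α : ℝ) : ℂ) * f (sRefl α x)
          * ((inner ℝ α x : ℝ) : ℂ) := by
      rw [inner_cast α x, Finset.mul_sum]
      exact Finset.sum_congr rfl fun j _ => by ring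
    have hy : ((sRefl α x i : ℝ) : ℂ) = (x i : ℂ)
        - 2 * ((inner ℝ α x : ℝ) : ℂ) / ((inner ℝ α α : ℝ) : ℂ) * (α i : ℂ) := by
      rw [sRefl_coord]; push_cast; ring
    rw [hsum, hy]
    ring
  · -- part 2
    simp only [mulX, Sop, Sbig, refOp, Finset.sum_add_distrib]
    have h1 : ∑ j, (if i = j then (1:ℂ) else 0) * ((x j : ℂ) * f x) = (x i : ℂ) * f x := by
      simp [ite_mul, Finset.sum_ite_eq]
    rw [h1, Finset.sum_comm]
    rw [mul_neg, sub_neg_eq_add, Finset.mul_sum, ← Finset.sum_neg_distrib,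
      ← Finset.sum_add_distrib, sub_eq_add_neg, ← Finset.sum_neg_distrib]
    congr 1
    refine Finset.sum_congr rfl fun α hα => ?_
    have hsum : ∑ j, 2 * g α * (α i : ℂ) * (α j : ℂ) / ((inner ℝ α α : ℝ) : ℂ)
          * (((sRefl α x j : ℝ) : ℂ) * f (sRefl α x))
        = 2 * g α * (α i : ℂ) / ((inner ℝ α α : ℝ) : ℂ) * f (sRefl α x)
          * ((inner ℝ α (sRefl α x) : ℝ) : ℂ) := by
      rw [inner_cast α (sRefl α x), Finset.mul_sum]
      exact Finset.sum_congr rfl fun j _ => by ring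
    rw [hsum, inner_sRefl_self (hRne α hα)]
    have hy : ((sRefl α x i : ℝ) : ℂ) = (x i : ℂ)
        - 2 * ((inner ℝ α x : ℝ) : ℂ) / ((inner ℝ α α : ℝ) : ℂ) * (α i : ℂ) := by
      rw [sRefl_coord]; push_cast; ring
    rw [hy]
    push_cast
    ring
  · -- part 3
    have est3 : ∀ α ∈ Rp,
        ∑ j, 2 * g α * (α i : ℂ) * (α j : ℂ) / ((inner ℝ α α : ℝ) : ℂ)
            * pd j (refOp α f) x
        = -(2 * g α * (α i : ℂ) / ((inner ℝ α α : ℝ) : ℂ)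
            * ∑ k, (α k : ℂ) * pd k f (sRefl α x)) := by
      intro α hα
      have hrw : ∀ j : Fin N, 2 * g α * (α i : ℂ) * (α j : ℂ) / ((inner ℝ α α : ℝ) : ℂ)
            * pd j (refOp α f) x
          = 2 * g α * (α i : ℂ) * (α j : ℂ) / ((inner ℝ α α : ℝ) : ℂ)
              * pd j f (sRefl α x)
            - 2 * g α * (α i : ℂ) * (α j : ℂ) / ((inner ℝ α α : ℝ) : ℂ)
              * (((2 * α j / (inner ℝ α α : ℝ) : ℝ) : ℂ)
                * ∑ k, (α k : ℂ) * pd k f (sRefl α x)) := by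
        intro j
        rw [pd_refOp x (hdfy α hα) j]
        ring
      rw [Finset.sum_congr rfl fun j _ => hrw j, Finset.sum_sub_distrib]
      have e1 : ∑ j, 2 * g α * (α i : ℂ) * (α j : ℂ) / ((inner ℝ α α : ℝ) : ℂ)
            * pd j f (sRefl α x)
          = 2 * g α * (α i : ℂ) / ((inner ℝ α α : ℝ) : ℂ)
            * ∑ k, (α k : ℂ) * pd k f (sRefl α x) := by
        rw [Finset.mul_sum]
        exact Finset.sum_congr rfl fun j _ => by ring
      have e2 : ∑ j, 2 * g α * (α i : ℂ) * (α j : ℂ) / ((inner ℝ α α : ℝ) : ℂ)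
            * (((2 * α j / (inner ℝ α α : ℝ) : ℝ) : ℂ)
              * ∑ k, (α k : ℂ) * pd k f (sRefl α x))
          = 2 * g α * (α i : ℂ) / ((inner ℝ α α : ℝ) : ℂ) * (2 / ((inner ℝ α α : ℝ) : ℂ))
            * (∑ k, (α k : ℂ) * pd k f (sRefl α x)) * ((inner ℝ α α : ℝ) : ℂ) := by
        calc ∑ j, 2 * g α * (α i : ℂ) * (α j : ℂ) / ((inner ℝ α α : ℝ) : ℂ)
              * (((2 * α j / (inner ℝ α α : ℝ) : ℝ) : ℂ)
                * ∑ k, (α k : ℂ) * pd k f (sRefl α x))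
            = ∑ j, 2 * g α * (α i : ℂ) / ((inner ℝ α α : ℝ) : ℂ)
                * (2 / ((inner ℝ α α : ℝ) : ℂ))
                * (∑ k, (α k : ℂ) * pd k f (sRefl α x)) * ((α j : ℂ) * (α j : ℂ)) := by
              refine Finset.sum_congr rfl fun j _ => ?_
              push_cast
              ring
          _ = 2 * g α * (α i : ℂ) / ((inner ℝ α α : ℝ) : ℂ) * (2 / ((inner ℝ α α : ℝ) : ℂ))
              * (∑ k, (α k : ℂ) * pd k f (sRefl α x)) * ∑ j, (α j : ℂ) * (α j : ℂ) := by
              rw [← Finset.mul_sum]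
          _ = _ := by rw [← inner_cast α α]
      rw [e1, e2]
      have hC := hCne α hα
      rw [show 2 * g α * (α i : ℂ) / ((inner ℝ α α : ℝ) : ℂ) * (2 / ((inner ℝ α α : ℝ) : ℂ))
            * (∑ k, (α k : ℂ) * pd k f (sRefl α x)) * ((inner ℝ α α : ℝ) : ℂ)
          = 2 * g α * (α i : ℂ) / ((inner ℝ α α : ℝ) : ℂ)
            * (∑ k, (α k : ℂ) * pd k f (sRefl α x))
            * (2 / ((inner ℝ α α : ℝ) : ℂ) * ((inner ℝ α α : ℝ) : ℂ)) from by ring,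
        div_mul_cancel₀ (2 : ℂ) hC]
      ring
    have ev2 : ∀ α ∈ Rp, ∀ β ∈ Rp,
        ∑ j, g β * (β j : ℂ) * ((inner ℝ β x : ℝ) : ℂ)⁻¹
          * (2 * g α * (α i : ℂ) * (α j : ℂ) / ((inner ℝ α α : ℝ) : ℂ)
            * f (sRefl α (sRefl β x)))
        = g α * g β * ((β i : ℂ) - ((sRefl α β) i : ℂ)) * ((inner ℝ β x : ℝ) : ℂ)⁻¹
          * f (sRefl α (sRefl β x)) := by
      intro α hα β hβ
      have hsc : ((sRefl α β) i : ℂ)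
          = (β i : ℂ) - 2 * ((inner ℝ α β : ℝ) : ℂ) * (α i : ℂ) / ((inner ℝ α α : ℝ) : ℂ) := by
        rw [sRefl_coord]; push_cast; ring
      have hic : ∑ j, g β * (β j : ℂ) * ((inner ℝ β x : ℝ) : ℂ)⁻¹
            * (2 * g α * (α i : ℂ) * (α j : ℂ) / ((inner ℝ α α : ℝ) : ℂ)
              * f (sRefl α (sRefl β x)))
          = g β * ((inner ℝ β x : ℝ) : ℂ)⁻¹ * (2 * g α * (α i : ℂ) / ((inner ℝ α α : ℝ) : ℂ))
            * f (sRefl α (sRefl β x)) * ((inner ℝ α β : ℝ) : ℂ) := by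
        rw [inner_cast α β, Finset.mul_sum]
        exact Finset.sum_congr rfl fun j _ => by ring
      rw [hic, hsc]
      ring
    simp only [dunkl, refOp, Sop]
    rw [Finset.sum_sub_distrib]
    have ep : ∑ j, pd j (Sop Rp g i j f) x
        = pd i f x - ∑ α ∈ Rp, 2 * g α * (α i : ℂ) / ((inner ℝ α α : ℝ) : ℂ)
            * ∑ k, (α k : ℂ) * pd k f (sRefl α x) := by
      rw [Finset.sum_congr rfl fun j _ => hpdSop j, Finset.sum_add_distrib]
      have h1 : ∑ j, (if i = j then (1:ℂ) else 0) * pd j f x = pd i f x := by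
        simp [ite_mul, Finset.sum_ite_eq]
      rw [h1, Finset.sum_comm, Finset.sum_congr rfl est3, Finset.sum_neg_distrib,
        ← sub_eq_add_neg]
    have ev : ∑ j, ∑ β ∈ Rp, g β * (β j : ℂ) * ((inner ℝ β x : ℝ) : ℂ)⁻¹
          * ((if i = j then (1:ℂ) else 0) * f (sRefl β x)
            + ∑ α ∈ Rp, 2 * g α * (α i : ℂ) * (α j : ℂ) / ((inner ℝ α α : ℝ) : ℂ)
              * f (sRefl α (sRefl β x)))
        = (∑ β ∈ Rp, g β * (β i : ℂ) * ((inner ℝ β x : ℝ) : ℂ)⁻¹ * f (sRefl β x))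
          + ∑ α ∈ Rp,
            ((∑ β ∈ Rp, g α * g β * (β i : ℂ) * ((inner ℝ β x : ℝ) : ℂ)⁻¹
               * f (sRefl α (sRefl β x)))
             - ∑ β ∈ Rp, g α * g β * (β i : ℂ) * ((inner ℝ β (sRefl α x) : ℝ) : ℂ)⁻¹
               * f (sRefl β (sRefl α x))) := by
      simp only [mul_add, Finset.sum_add_distrib]
      congr 1
      · rw [Finset.sum_comm]
        refine Finset.sum_congr rfl fun β hβ => ?_
        simp [mul_ite, Finset.sum_ite_eq]
      · rw [Finset.sum_comm]
        rw [show (∑ β ∈ Rp, ∑ j, g β * (β j : ℂ) * ((inner ℝ β x : ℝ) : ℂ)⁻¹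
              * ∑ α ∈ Rp, 2 * g α * (α i : ℂ) * (α j : ℂ) / ((inner ℝ α α : ℝ) : ℂ)
                * f (sRefl α (sRefl β x)))
            = ∑ β ∈ Rp, ∑ j, ∑ α ∈ Rp, g β * (β j : ℂ) * ((inner ℝ β x : ℝ) : ℂ)⁻¹
              * (2 * g α * (α i : ℂ) * (α j : ℂ) / ((inner ℝ α α : ℝ) : ℂ)
                * f (sRefl α (sRefl β x)))
          from Finset.sum_congr rfl fun β _ => Finset.sum_congr rfl fun j _ =>
            Finset.mul_sum _ _ _]
        rw [show (∑ β ∈ Rp, ∑ j, ∑ α ∈ Rp, g β * (β j : ℂ) * ((inner ℝ β x : ℝ) : ℂ)⁻¹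
              * (2 * g α * (α i : ℂ) * (α j : ℂ) / ((inner ℝ α α : ℝ) : ℂ)
                * f (sRefl α (sRefl β x))))
            = ∑ β ∈ Rp, ∑ α ∈ Rp, ∑ j, g β * (β j : ℂ) * ((inner ℝ β x : ℝ) : ℂ)⁻¹
              * (2 * g α * (α i : ℂ) * (α j : ℂ) / ((inner ℝ α α : ℝ) : ℂ)
                * f (sRefl α (sRefl β x)))
          from Finset.sum_congr rfl fun β _ => Finset.sum_comm]
        rw [Finset.sum_comm]
        refine Finset.sum_congr rfl fun α hα => ?_
        rw [Finset.sum_congr rfl fun β hβ => ev2 α hα β hβ]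
        calc ∑ β ∈ Rp, g α * g β * ((β i : ℂ) - ((sRefl α β) i : ℂ))
              * ((inner ℝ β x : ℝ) : ℂ)⁻¹ * f (sRefl α (sRefl β x))
            = (∑ β ∈ Rp, g α * g β * (β i : ℂ) * ((inner ℝ β x : ℝ) : ℂ)⁻¹
                * f (sRefl α (sRefl β x)))
              - g α * ∑ β ∈ Rp, g β * ((sRefl α β) i : ℂ) * ((inner ℝ β x : ℝ) : ℂ)⁻¹
                * f (sRefl α (sRefl β x)) := by
              rw [Finset.mul_sum, ← Finset.sum_sub_distrib]
              exact Finset.sum_congr rfl fun β _ => by ring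
          _ = _ := by
              rw [← coreU α hα, Finset.mul_sum]
              congr 1
              exact Finset.sum_congr rfl fun β _ => by ring
    rw [ep, ev]
    rw [show (pd i (Sbig Rp g f) x - ∑ β ∈ Rp, g β * (β i : ℂ) * ((inner ℝ β x : ℝ) : ℂ)⁻¹
          * Sbig Rp g f (sRefl β x)) = dunkl Rp g i (Sbig Rp g f) x from rfl]
    rw [show (pd i f x - ∑ β ∈ Rp, g β * (β i : ℂ) * ((inner ℝ β x : ℝ) : ℂ)⁻¹ * f (sRefl β x))
        = dunkl Rp g i f x from rfl]
    rw [hcomm]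
    rw [show dunkl Rp g i f x = pd i f x - ∑ β ∈ Rp, g β * (β i : ℂ)
        * ((inner ℝ β x : ℝ) : ℂ)⁻¹ * f (sRefl β x) from rfl]
    rw [show (∑ α ∈ Rp,
        ((∑ β ∈ Rp, g α * g β * (β i : ℂ) * ((inner ℝ β (sRefl α x) : ℝ) : ℂ)⁻¹
            * f (sRefl β (sRefl α x)))
          - 2 * g α * (α i : ℂ) / ((inner ℝ α α : ℝ) : ℂ)
            * ∑ k, (α k : ℂ) * pd k f (sRefl α x)
          - ∑ β ∈ Rp, g α * g β * (β i : ℂ) * ((inner ℝ β x : ℝ) : ℂ)⁻¹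
            * f (sRefl α (sRefl β x))))
      = (-∑ α ∈ Rp, 2 * g α * (α i : ℂ) / ((inner ℝ α α : ℝ) : ℂ)
            * ∑ k, (α k : ℂ) * pd k f (sRefl α x))
        - ∑ α ∈ Rp,
            ((∑ β ∈ Rp, g α * g β * (β i : ℂ) * ((inner ℝ β x : ℝ) : ℂ)⁻¹
               * f (sRefl α (sRefl β x)))
             - ∑ β ∈ Rp, g α * g β * (β i : ℂ) * ((inner ℝ β (sRefl α x) : ℝ) : ℂ)⁻¹
               * f (sRefl β (sRefl α x)))
      from by
        rw [← Finset.sum_neg_distrib, ← Finset.sum_sub_distrib]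
        exact Finset.sum_congr rfl fun α _ => by ring]
    ring
  · -- part 4
    have hstep : ∀ α ∈ Rp,
        ∑ j, 2 * g α * (α i : ℂ) * (α j : ℂ) / ((inner ℝ α α : ℝ) : ℂ)
            * dunkl Rp g j f (sRefl α x)
        = 2 * g α * (α i : ℂ) / ((inner ℝ α α : ℝ) : ℂ)
            * ∑ k, (α k : ℂ) * pd k f (sRefl α x)
          - ∑ β ∈ Rp, g α * g β * (β i : ℂ) * ((inner ℝ β (sRefl α x) : ℝ) : ℂ)⁻¹
            * f (sRefl β (sRefl α x))
          + ∑ β ∈ Rp, g α * g β * (β i : ℂ) * ((inner ℝ β x : ℝ) : ℂ)⁻¹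
            * f (sRefl α (sRefl β x)) := by
      intro α hα
      simp only [dunkl, refOp, mul_sub]
      rw [Finset.sum_sub_distrib]
      have e1 : ∑ j, 2 * g α * (α i : ℂ) * (α j : ℂ) / ((inner ℝ α α : ℝ) : ℂ)
            * pd j f (sRefl α x)
          = 2 * g α * (α i : ℂ) / ((inner ℝ α α : ℝ) : ℂ)
            * ∑ k, (α k : ℂ) * pd k f (sRefl α x) := by
        rw [Finset.mul_sum]
        exact Finset.sum_congr rfl fun j _ => by ring
      have e2 : ∑ j, 2 * g α * (α i : ℂ) * (α j : ℂ) / ((inner ℝ α α : ℝ) : ℂ)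
            * ∑ β ∈ Rp, g β * (β j : ℂ) * ((inner ℝ β (sRefl α x) : ℝ) : ℂ)⁻¹
              * f (sRefl β (sRefl α x))
          = (∑ β ∈ Rp, g α * g β * (β i : ℂ) * ((inner ℝ β (sRefl α x) : ℝ) : ℂ)⁻¹
              * f (sRefl β (sRefl α x)))
            - ∑ β ∈ Rp, g α * g β * (β i : ℂ) * ((inner ℝ β x : ℝ) : ℂ)⁻¹
              * f (sRefl α (sRefl β x)) := by
        calc ∑ j, 2 * g α * (α i : ℂ) * (α j : ℂ) / ((inner ℝ α α : ℝ) : ℂ)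
              * ∑ β ∈ Rp, g β * (β j : ℂ) * ((inner ℝ β (sRefl α x) : ℝ) : ℂ)⁻¹
                * f (sRefl β (sRefl α x))
            = ∑ j, ∑ β ∈ Rp, 2 * g α * (α i : ℂ) * (α j : ℂ) / ((inner ℝ α α : ℝ) : ℂ)
              * (g β * (β j : ℂ) * ((inner ℝ β (sRefl α x) : ℝ) : ℂ)⁻¹
                * f (sRefl β (sRefl α x))) := by
              exact Finset.sum_congr rfl fun j _ => Finset.mul_sum _ _ _
          _ = ∑ β ∈ Rp, ∑ j, 2 * g α * (α i : ℂ) * (α j : ℂ) / ((inner ℝ α α : ℝ) : ℂ)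
              * (g β * (β j : ℂ) * ((inner ℝ β (sRefl α x) : ℝ) : ℂ)⁻¹
                * f (sRefl β (sRefl α x))) := Finset.sum_comm
          _ = ∑ β ∈ Rp, g α * g β * ((β i : ℂ) - ((sRefl α β) i : ℂ))
              * ((inner ℝ β (sRefl α x) : ℝ) : ℂ)⁻¹ * f (sRefl β (sRefl α x)) := by
              refine Finset.sum_congr rfl fun β hβ => ?_
              have hsc : ((sRefl α β) i : ℂ)
                  = (β i : ℂ) - 2 * ((inner ℝ α β : ℝ) : ℂ) * (α i : ℂ)
                    / ((inner ℝ α α : ℝ) : ℂ) := by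
                rw [sRefl_coord]; push_cast; ring
              have hic : ∑ j, 2 * g α * (α i : ℂ) * (α j : ℂ) / ((inner ℝ α α : ℝ) : ℂ)
                    * (g β * (β j : ℂ) * ((inner ℝ β (sRefl α x) : ℝ) : ℂ)⁻¹
                      * f (sRefl β (sRefl α x)))
                  = 2 * g α * (α i : ℂ) / ((inner ℝ α α : ℝ) : ℂ)
                    * (g β * ((inner ℝ β (sRefl α x) : ℝ) : ℂ)⁻¹ * f (sRefl β (sRefl α x)))
                    * ((inner ℝ α β : ℝ) : ℂ) := by
                rw [inner_cast α β, Finset.mul_sum]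
                exact Finset.sum_congr rfl fun j _ => by ring
              rw [hic, hsc]
              ring
          _ = (∑ β ∈ Rp, g α * g β * (β i : ℂ) * ((inner ℝ β (sRefl α x) : ℝ) : ℂ)⁻¹
                * f (sRefl β (sRefl α x)))
              - g α * ∑ β ∈ Rp, g β * ((sRefl α β) i : ℂ)
                * ((inner ℝ β (sRefl α x) : ℝ) : ℂ)⁻¹ * f (sRefl β (sRefl α x)) := by
              rw [Finset.mul_sum, ← Finset.sum_sub_distrib]
              exact Finset.sum_congr rfl fun β hβ => by ring
          _ = _ := by
              rw [coreV α hα, Finset.mul_sum]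
              congr 1
              exact Finset.sum_congr rfl fun β hβ => by ring
      rw [e1, e2]
      ring
    simp only [Sop, refOp]
    rw [Finset.sum_add_distrib]
    have h1 : ∑ j, (if i = j then (1:ℂ) else 0) * dunkl Rp g j f x = dunkl Rp g i f x := by
      simp [ite_mul, Finset.sum_ite_eq]
    rw [h1, Finset.sum_comm, hcomm, Finset.sum_congr rfl hstep, sub_eq_add_neg,
      ← Finset.sum_neg_distrib]
    congr 1
    exact Finset.sum_congr rfl fun α _ => by ring
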